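/- Let G be a linearly ordered abelian group, n ∈ ℕ, a ∈ G, and C ⊆ G a convex subgroup. Then H_{n,a} ⊆ C if and only if a ∈ G^{[n]}_C + nG. -/

import Mathlib

open Pointwise

/-- The set `nG = {n·g : g ∈ G}`. -/
def NG (G : Type*) [AddCommGroup G] (n : ℕ) : Set G :=
  {x : G | ∃ g : G, n • g = x}

/-- `H` is a convex subgroup of the linearly ordered abelian group `G`. -/
def IsConvexSubgroup {G : Type*} [AddCommGroup G] [LinearOrder G] [IsOrderedAddMonoid G] (H : Set G) : Prop :=
  (0 : G) ∈ H ∧ (∀ x ∈ H, ∀ y ∈ H, x + y ∈ H) ∧ (∀ x ∈ H, -x ∈ H) ∧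
    ∀ a ∈ H, ∀ b : G, 0 ≤ b → b ≤ a → b ∈ H

/-- `H_{n,a}`: the largest convex subgroup `H` with `a ∉ H + nG` (it is the union of
all such subgroups), and `{0}` if `a ∈ nG` (in which case the union is empty). -/
def Hna {G : Type*} [AddCommGroup G] [LinearOrder G] [IsOrderedAddMonoid G] (n : ℕ) (a : G) : Set G :=
  {0} ∪ ⋃₀ {H : Set G | IsConvexSubgroup H ∧ a ∉ H + NG G n}

/-- `H'_{n,b} = ⋃ {H_{n,a} : a ∈ G, b ∉ H_{n,a}}`, with `{0}` for the empty union. -/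
def Hnb' {G : Type*} [AddCommGroup G] [LinearOrder G] [IsOrderedAddMonoid G] (n : ℕ) (b : G) : Set G :=
  {0} ∪ ⋃₀ {H : Set G | ∃ a : G, H = Hna n a ∧ b ∉ Hna n a}

/-- `G^{[n]}_C = ⋂ {H + nG : H convex subgroup, H ⊋ C}`, with `G` for the empty
intersection. -/
def Gbr {G : Type*} [AddCommGroup G] [LinearOrder G] [IsOrderedAddMonoid G] (C : Set G) (n : ℕ) : Set G :=
  ⋂₀ {S : Set G | ∃ H : Set G, IsConvexSubgroup H ∧ C ⊂ H ∧ S = H + NG G n}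

lemma mem_add_NG {G : Type*} [AddCommGroup G] [LinearOrder G] [IsOrderedAddMonoid G] {H : Set G} {n : ℕ} {a : G} :
    a ∈ H + NG G n ↔ ∃ h ∈ H, ∃ g : G, a = h + n • g := by
  constructor
  · rintro ⟨h, hh, x, ⟨g, rfl⟩, rfl⟩
    exact ⟨h, hh, g, rfl⟩
  · rintro ⟨h, hh, g, rfl⟩
    exact ⟨h, hh, n • g, ⟨g, rfl⟩, rfl⟩

/-- Convex subgroups are comparable. -/
lemma convex_comparable {G : Type*} [AddCommGroup G] [LinearOrder G] [IsOrderedAddMonoid G] {H K : Set G}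
    (hH : IsConvexSubgroup H) (hK : IsConvexSubgroup K) : H ⊆ K ∨ K ⊆ H := by
  by_cases hHK : H ⊆ K
  · exact Or.inl hHK
  right
  obtain ⟨h, hhH, hhK⟩ := Set.not_subset.mp hHK
  have key : ∀ h' : G, 0 ≤ h' → h' ∈ H → h' ∉ K → ∀ k ∈ K, 0 ≤ k → k ∈ H := by
    intro h' h0 hH' hK' k hk hk0
    rcases le_total k h' with h1 | h1
    · exact hH.2.2.2 h' hH' k hk0 h1
    · exact absurd (hK.2.2.2 k hk h' h0 h1) hK'
  have key2 : ∀ k ∈ K, 0 ≤ k → k ∈ H := by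
    rcases le_total 0 h with h0 | h0
    · exact key h h0 hhH hhK
    · exact key (-h) (neg_nonneg.mpr h0) (hH.2.2.1 h hhH)
        (fun hc => hhK (by simpa using hK.2.2.1 _ hc))
  intro k hk
  rcases le_total 0 k with hk0 | hk0
  · exact key2 k hk hk0
  · have := key2 (-k) (hK.2.2.1 k hk) (neg_nonneg.mpr hk0)
    simpa using hH.2.2.1 _ this

/-- For a convex subgroup `C`, positive `n`, and `a ∈ G`:
`H_{n,a} ⊆ C ↔ a ∈ G^{[n]}_C + nG`. -/
theorem Hna_subset_iff_mem_Gbr_add {G : Type*} [AddCommGroup G] [LinearOrder G] [IsOrderedAddMonoid G]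
    (n : ℕ) (hn : 0 < n) (a : G) (C : Set G) (hC : IsConvexSubgroup C) :
    Hna n a ⊆ C ↔ a ∈ Gbr C n + NG G n := by
  have equiv1 : (∀ H : Set G, IsConvexSubgroup H → C ⊂ H → a ∈ H + NG G n) ↔
      a ∈ Gbr C n + NG G n := by
    constructor
    · intro P
      by_cases hex : ∃ H : Set G, IsConvexSubgroup H ∧ C ⊂ H
      · obtain ⟨H₀, h₀, hC₀⟩ := hex
        obtain ⟨h, hh, g, rfl⟩ := mem_add_NG.mp (P H₀ h₀ hC₀)
        have hGbr : h ∈ Gbr C n := by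
          intro S hS
          obtain ⟨H', hH', hCH', rfl⟩ := hS
          rcases convex_comparable h₀ hH' with hsub | hsub
          · exact mem_add_NG.mpr ⟨h, hsub hh, 0, by simp⟩
          · obtain ⟨h', hh', g', heq⟩ := mem_add_NG.mp (P H' hH' hCH')
            refine mem_add_NG.mpr ⟨h', hh', g' - g, ?_⟩
            have : h = h' + n • g' - n • g := by
              rw [← heq]; abel
            rw [this, smul_sub]; abel
        exact ⟨h, hGbr, n • g, ⟨g, rfl⟩, rfl⟩
      · have hGbr : a ∈ Gbr C n := by
          intro S hS
          obtain ⟨H', hH', hCH', rfl⟩ := hS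
          exact absurd ⟨H', hH', hCH'⟩ hex
        exact ⟨a, hGbr, n • 0, ⟨0, rfl⟩, by simp⟩
    · rintro ⟨x, hx, y, ⟨g, rfl⟩, rfl⟩ H hH hCH
      have hxH : x ∈ H + NG G n := hx _ ⟨H, hH, hCH, rfl⟩
      obtain ⟨h, hh, g', rfl⟩ := mem_add_NG.mp hxH
      refine mem_add_NG.mpr ⟨h, hh, g' + g, ?_⟩
      rw [smul_add]; abel
  rw [← equiv1]
  constructor
  · intro hsub H hH hCH
    by_contra hna
    have : H ⊆ Hna n a := fun x hx => Or.inr ⟨H, ⟨hH, hna⟩, hx⟩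
    exact hCH.not_subset (this.trans hsub)
  · intro P x hx
    rcases hx with hx | ⟨H, ⟨hH, hna⟩, hxH⟩
    · rw [Set.mem_singleton_iff.mp hx]; exact hC.1
    · have hnot : ¬ C ⊂ H := fun hc => hna (P H hH hc)
      rcases convex_comparable hH hC with hsub | hsub
      · exact hsub hxH
      · have : C = H := by
          by_contra hne
          exact hnot ⟨hsub, fun h2 => hne (Set.Subset.antisymm hsub h2)⟩
        rw [this]; exact hxH
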